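/- Let D be an oriented graph on n vertices with minimum semi-degree at least (1/2 - c)n, let ε > 0 with 2cn ≤ εn, and for a set X define iteratively X^{0+} = X and X^{i+} = {x ∈ X^{(i-1)+} : d^-(x, X^{(i-1)+}) ≥ εn}. Then for every i ≥ 1, |X^{i+}| ≥ |X|/2^i - 2εn. -/
import Mathlib


/-- Out-degree of a vertex in a digraph given by the relation `G`. -/
noncomputable def outDeg {V : Type*} (G : V → V → Prop) (v : V) : ℕ :=
  Nat.card {w : V // G v w}

/-- In-degree of a vertex in a digraph given by the relation `G`. -/
noncomputable def inDeg {V : Type*} (G : V → V → Prop) (v : V) : ℕ :=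
  Nat.card {w : V // G w v}

/-- The iterated sets `X^{i+}`: `X^{0+} = X` and
`X^{i+} = {x ∈ X^{(i-1)+} : d⁻(x, X^{(i-1)+}) ≥ εn}`. -/
noncomputable def iterPlus {V : Type*} (G : V → V → Prop) (ε : ℝ) (n : ℕ) (X : Set V) :
    ℕ → Set V
  | 0 => X
  | i + 1 =>
      {x ∈ iterPlus G ε n X i |
        ε * n ≤ (Nat.card {w : V // w ∈ iterPlus G ε n X i ∧ G w x} : ℝ)}

open Finset in
private lemma sum_dm_eq_sum_dp {V : Type*} [Fintype V] [DecidableEq V]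
    (G : V → V → Prop) [DecidableRel G] (S : Finset V) :
    ∑ x ∈ S, (S.filter (fun w => G w x)).card = ∑ x ∈ S, (S.filter (fun w => G x w)).card := by
  simp only [Finset.card_filter]
  exact Finset.sum_comm

open Finset in
private lemma two_e_le {V : Type*} [Fintype V] [DecidableEq V]
    (G : V → V → Prop) [DecidableRel G] (hor : ∀ u v, G u v → ¬ G v u) (T : Finset V) :
    2 * ∑ x ∈ T, (T.filter (fun w => G w x)).card ≤ T.card * (T.card - 1) := by
  have h2 : 2 * ∑ x ∈ T, (T.filter (fun w => G w x)).card
      = ∑ x ∈ T, ((T.filter (fun w => G w x)).card + (T.filter (fun w => G x w)).card) := by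
    rw [Finset.sum_add_distrib, two_mul, sum_dm_eq_sum_dp G T]
  rw [h2]
  have hbd : ∀ x ∈ T, (T.filter (fun w => G w x)).card + (T.filter (fun w => G x w)).card
      ≤ T.card - 1 := by
    intro x hx
    have hdisj : Disjoint (T.filter (fun w => G w x)) (T.filter (fun w => G x w)) := by
      rw [Finset.disjoint_left]
      intro a ha hb
      exact hor x a (Finset.mem_filter.1 hb).2 (Finset.mem_filter.1 ha).2
    rw [← Finset.card_union_of_disjoint hdisj]
    have hsub : (T.filter (fun w => G w x)) ∪ (T.filter (fun w => G x w)) ⊆ T.erase x := by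
      intro a ha
      rcases Finset.mem_union.1 ha with h | h
      · refine Finset.mem_erase.2 ⟨?_, (Finset.mem_filter.1 h).1⟩
        intro e
        exact hor x x (e ▸ (Finset.mem_filter.1 h).2) (e ▸ (Finset.mem_filter.1 h).2)
      · refine Finset.mem_erase.2 ⟨?_, (Finset.mem_filter.1 h).1⟩
        intro e
        exact hor x x (e ▸ (Finset.mem_filter.1 h).2) (e ▸ (Finset.mem_filter.1 h).2)
    calc ((T.filter (fun w => G w x)) ∪ (T.filter (fun w => G x w))).card
        ≤ (T.erase x).card := Finset.card_le_card hsub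
      _ = T.card - 1 := Finset.card_erase_of_mem hx
  calc ∑ x ∈ T, ((T.filter (fun w => G w x)).card + (T.filter (fun w => G x w)).card)
      ≤ ∑ _x ∈ T, (T.card - 1) := Finset.sum_le_sum hbd
    _ = T.card * (T.card - 1) := by rw [Finset.sum_const, smul_eq_mul]

open scoped Classical in
private lemma natCard_mem_and {V : Type*} [Fintype V] (Y : Set V) (q : V → Prop) :
    Nat.card {w : V // w ∈ Y ∧ q w} = (Y.toFinset.filter q).card := by
  rw [Nat.card_eq_fintype_card, Fintype.card_subtype]
  have h : (Finset.univ.filter fun w => w ∈ Y ∧ q w) = Y.toFinset.filter q := by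
    ext a
    simp [Set.mem_toFinset]
  rw [h]

open Finset in
private lemma master {V : Type*} [Fintype V] [DecidableEq V] (G : V → V → Prop) [DecidableRel G]
    (hor : ∀ u v, G u v → ¬ G v u) (c ε : ℝ) (n : ℕ)
    (hn : Fintype.card V = n) (hcε : 2*c*(n:ℝ) ≤ ε*n)
    (hdeg : ∀ v : V, ((1:ℝ)/2 - c) * n ≤ (outDeg G v : ℝ) ∧
                     ((1:ℝ)/2 - c) * n ≤ (inDeg G v : ℝ))
    (S T : Finset V) (hTS : T ⊆ S)
    (hout : ∀ x ∈ S, x ∉ T → ((S.filter (fun w => G w x)).card : ℝ) ≤ ε*n) :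
    (S.card:ℝ) * ((S.card:ℝ) - ε*n) ≤
      (T.card:ℝ)*((T.card:ℝ)-1) + 2*(T.card:ℝ)*((S.card:ℝ) - (T.card:ℝ))
        + 2*((S.card:ℝ) - (T.card:ℝ))*(ε*n) := by
  classical
  set y : ℝ := (S.card : ℝ) with hy
  set z : ℝ := (T.card : ℝ) with hz
  have hzy : z ≤ y := Nat.cast_le.mpr (Finset.card_le_card hTS)
  have hznn : (0:ℝ) ≤ z := by positivity
  -- the in-degree within S plus out-degree within S is large, for every x
  have hlow : ∀ x : V, ((1:ℝ) - 2*c)*n + y - n ≤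
      ((S.filter (fun w => G w x)).card : ℝ) + ((S.filter (fun w => G x w)).card : ℝ) := by
    intro x
    set A : Finset V := Finset.univ.filter (fun w => G w x) with hA
    set B : Finset V := Finset.univ.filter (fun w => G x w) with hB
    have hAcard : inDeg G x = A.card := by
      rw [inDeg, Nat.card_eq_fintype_card, Fintype.card_subtype]
    have hBcard : outDeg G x = B.card := by
      rw [outDeg, Nat.card_eq_fintype_card, Fintype.card_subtype]
    have hdisj : Disjoint A B := by
      rw [Finset.disjoint_left]
      intro a ha hb
      exact hor x a (Finset.mem_filter.1 hb).2 (Finset.mem_filter.1 ha).2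
    -- S.filter (G · x) = A ∩ S etc.
    have hSA : S.filter (fun w => G w x) = A ∩ S := by
      ext a; simp [hA, and_comm]
    have hSB : S.filter (fun w => G x w) = B ∩ S := by
      ext a; simp [hB, and_comm]
    have hdisj2 : Disjoint (A ∩ S) (B ∩ S) :=
      Finset.disjoint_of_subset_left Finset.inter_subset_left
        (Finset.disjoint_of_subset_right Finset.inter_subset_left hdisj)
    have hunion : (A ∩ S) ∪ (B ∩ S) = (A ∪ B) ∩ S := by
      rw [Finset.union_inter_distrib_right]
    have hcards : (A ∩ S).card + (B ∩ S).card = ((A ∪ B) ∩ S).card := by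
      rw [← Finset.card_union_of_disjoint hdisj2, hunion]
    have hAB : (A ∪ B).card = A.card + B.card := Finset.card_union_of_disjoint hdisj
    have hincl : ((A ∪ B) ∩ S).card + ((A ∪ B) ∪ S).card = (A ∪ B).card + S.card :=
      Finset.card_inter_add_card_union _ _
    have hle : ((A ∪ B) ∪ S).card ≤ n := by
      rw [← hn]; exact Finset.card_le_univ _
    have hdeg' := hdeg x
    rw [hSA, hSB]
    have h1 : ((A ∩ S).card : ℝ) + ((B ∩ S).card : ℝ) = (((A ∪ B) ∩ S).card : ℝ) := by
      exact_mod_cast hcards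
    have h2 : (((A ∪ B) ∩ S).card : ℝ) + (((A ∪ B) ∪ S).card : ℝ)
        = ((A ∪ B).card : ℝ) + ((S.card : ℕ) : ℝ) := by exact_mod_cast hincl
    have h3 : ((A ∪ B).card : ℝ) = (A.card : ℝ) + (B.card : ℝ) := by exact_mod_cast hAB
    have h4 : (((A ∪ B) ∪ S).card : ℝ) ≤ (n : ℝ) := by exact_mod_cast hle
    have hAge : ((1:ℝ)/2 - c) * n ≤ (A.card : ℝ) := by
      have := hdeg'.2
      rw [hAcard] at this
      exact this
    have hBge : ((1:ℝ)/2 - c) * n ≤ (B.card : ℝ) := by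
      have := hdeg'.1
      rw [hBcard] at this
      exact this
    linarith
  -- lower bound on twice the number of arcs within S
  have hlower : y * (((1:ℝ) - 2*c)*n + y - n) ≤
      2 * ∑ x ∈ S, ((S.filter (fun w => G w x)).card : ℝ) := by
    have hsum : ∑ x ∈ S, (((1:ℝ) - 2*c)*n + y - n) ≤
        ∑ x ∈ S, (((S.filter (fun w => G w x)).card : ℝ)
          + ((S.filter (fun w => G x w)).card : ℝ)) :=
      Finset.sum_le_sum (fun x _ => hlow x)
    have hconst : ∑ _x ∈ S, (((1:ℝ) - 2*c)*n + y - n) = y * (((1:ℝ) - 2*c)*n + y - n) := by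
      rw [Finset.sum_const, nsmul_eq_mul]
    have hsplit : ∑ x ∈ S, (((S.filter (fun w => G w x)).card : ℝ)
          + ((S.filter (fun w => G x w)).card : ℝ))
        = 2 * ∑ x ∈ S, ((S.filter (fun w => G w x)).card : ℝ) := by
      rw [Finset.sum_add_distrib, two_mul]
      have h' : ∑ x ∈ S, ((S.filter (fun w => G x w)).card : ℝ)
          = ∑ x ∈ S, ((S.filter (fun w => G w x)).card : ℝ) := by
        exact_mod_cast (sum_dm_eq_sum_dp G S).symm
      rw [h']
    rw [hconst] at hsum
    rw [hsplit] at hsum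
    exact hsum
  -- upper bound
  have hcardsd : ((S \ T).card : ℝ) = y - z := by
    rw [Finset.card_sdiff_of_subset hTS]
    push_cast [Nat.cast_sub (Finset.card_le_card hTS)]
    ring
  have hupper : ∑ x ∈ S, ((S.filter (fun w => G w x)).card : ℝ) ≤
      (∑ x ∈ T, ((T.filter (fun w => G w x)).card : ℝ)) + z * (y - z) + (y - z) * (ε*n) := by
    have hsd : (∑ x ∈ S \ T, ((S.filter (fun w => G w x)).card : ℝ))
        + ∑ x ∈ T, ((S.filter (fun w => G w x)).card : ℝ)
        = ∑ x ∈ S, ((S.filter (fun w => G w x)).card : ℝ) := Finset.sum_sdiff hTS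
    have hb1 : ∑ x ∈ S \ T, ((S.filter (fun w => G w x)).card : ℝ) ≤ (y - z) * (ε*n) := by
      have : ∀ x ∈ S \ T, ((S.filter (fun w => G w x)).card : ℝ) ≤ ε*n := by
        intro x hx
        have hx' := Finset.mem_sdiff.1 hx
        exact hout x hx'.1 hx'.2
      calc ∑ x ∈ S \ T, ((S.filter (fun w => G w x)).card : ℝ)
          ≤ ∑ _x ∈ S \ T, (ε*n) := Finset.sum_le_sum this
        _ = ((S \ T).card : ℝ) * (ε*n) := by rw [Finset.sum_const, nsmul_eq_mul]
        _ = (y - z) * (ε*n) := by rw [hcardsd]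
    have hb2 : ∑ x ∈ T, ((S.filter (fun w => G w x)).card : ℝ) ≤
        (∑ x ∈ T, ((T.filter (fun w => G w x)).card : ℝ)) + z * (y - z) := by
      have hterm : ∀ x ∈ T, ((S.filter (fun w => G w x)).card : ℝ) ≤
          ((T.filter (fun w => G w x)).card : ℝ) + (y - z) := by
        intro x _
        have hsub : S.filter (fun w => G w x) ⊆ (T.filter (fun w => G w x)) ∪ (S \ T) := by
          intro a ha
          have ha' := Finset.mem_filter.1 ha
          by_cases haT : a ∈ T
          · exact Finset.mem_union.2 (Or.inl (Finset.mem_filter.2 ⟨haT, ha'.2⟩))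
          · exact Finset.mem_union.2 (Or.inr (Finset.mem_sdiff.2 ⟨ha'.1, haT⟩))
        have := Finset.card_le_card hsub
        have h2 := Finset.card_union_le (T.filter (fun w => G w x)) (S \ T)
        have h3 : (S.filter (fun w => G w x)).card ≤
            (T.filter (fun w => G w x)).card + (S \ T).card := le_trans this h2
        have h4 : ((S.filter (fun w => G w x)).card : ℝ) ≤
            ((T.filter (fun w => G w x)).card : ℝ) + ((S \ T).card : ℝ) := by exact_mod_cast h3
        rw [hcardsd] at h4
        exact h4
      calc ∑ x ∈ T, ((S.filter (fun w => G w x)).card : ℝ)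
          ≤ ∑ x ∈ T, (((T.filter (fun w => G w x)).card : ℝ) + (y - z)) :=
            Finset.sum_le_sum hterm
        _ = (∑ x ∈ T, ((T.filter (fun w => G w x)).card : ℝ)) + z * (y - z) := by
            rw [Finset.sum_add_distrib, Finset.sum_const, nsmul_eq_mul]
    linarith [hsd, hb1, hb2]
  -- arcs within T
  have heT : 2 * ∑ x ∈ T, ((T.filter (fun w => G w x)).card : ℝ) ≤ z * (z - 1) := by
    have hnat := two_e_le G hor T
    rcases Nat.eq_zero_or_pos T.card with h0 | h1
    · have hTempty : T = ∅ := Finset.card_eq_zero.1 h0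
      have hz0 : z = 0 := by rw [hz, hTempty]; simp
      rw [hTempty, hz0]
      simp
    · have : ((T.card * (T.card - 1) : ℕ) : ℝ) = z * (z - 1) := by
        push_cast [Nat.cast_sub h1]
        ring
      calc 2 * ∑ x ∈ T, ((T.filter (fun w => G w x)).card : ℝ)
          = ((2 * ∑ x ∈ T, (T.filter (fun w => G w x)).card : ℕ) : ℝ) := by push_cast; ring
        _ ≤ ((T.card * (T.card - 1) : ℕ) : ℝ) := by exact_mod_cast hnat
        _ = z * (z - 1) := this
  -- combine
  have hynn : (0:ℝ) ≤ y := by positivity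
  have hstep : y * (y - ε*n) ≤ y * (((1:ℝ) - 2*c)*n + y - n) := by
    nlinarith [mul_nonneg hynn (by linarith : (0:ℝ) ≤ ε*n - 2*c*n)]
  nlinarith [hlower, hupper, heT, hstep]

open Finset in
theorem stmt6 {V : Type*} [Fintype V] (G : V → V → Prop)
    (horiented : ∀ u v, G u v → ¬ G v u)
    (c ε : ℝ) (hc : 0 < c) (hε : 0 < ε) (n : ℕ) (hn : Fintype.card V = n)
    (hcε : 2*c*n ≤ ε*n)
    (hdeg : ∀ v : V, ((1:ℝ)/2 - c) * n ≤ (outDeg G v : ℝ) ∧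
                     ((1:ℝ)/2 - c) * n ≤ (inDeg G v : ℝ))
    (X : Set V) :
    ∀ i : ℕ, 1 ≤ i →
      (X.ncard : ℝ)/2^i - 2*ε*n ≤ ((iterPlus G ε n X i).ncard : ℝ) := by
  classical
  set a : ℕ → ℝ := fun i => ((iterPlus G ε n X i).ncard : ℝ) with ha
  have hnonneg : ∀ i, 0 ≤ a i := fun i => by positivity
  rcases Nat.eq_zero_or_pos n with hn0 | hnpos
  · intro i _
    have hVempty : IsEmpty V := by
      rw [← Fintype.card_eq_zero_iff, hn, hn0]
    have hX0 : X.ncard = 0 := by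
      have : X = ∅ := Set.eq_empty_of_isEmpty X
      simp [this]
    have hncast : ((n:ℝ)) = 0 := by rw [hn0]; norm_num
    rw [hX0, hncast]
    simp only [Nat.cast_zero, zero_div, mul_zero, zero_sub, neg_nonpos]
    have := hnonneg i
    simp only [ha] at this
    linarith
  -- now n ≥ 1
  have hεn : (0:ℝ) < ε * n := by
    have : (0:ℝ) < (n:ℝ) := by exact_mod_cast hnpos
    positivity
  -- relate iterPlus to finsets and get the master inequality for each step
  have hsub : ∀ i, iterPlus G ε n X (i+1) ⊆ iterPlus G ε n X i := by
    intro i x hx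
    exact hx.1
  have hmono : ∀ i, a (i+1) ≤ a i := by
    intro i
    exact Nat.cast_le.mpr (Set.ncard_le_ncard (hsub i) (Set.toFinite _))
  have hmaster : ∀ i, (a i) * (a i - ε*n) ≤
      a (i+1) * (a (i+1) - 1) + 2 * a (i+1) * (a i - a (i+1))
        + 2 * (a i - a (i+1)) * (ε*n) := by
    intro i
    set S : Finset V := (iterPlus G ε n X i).toFinset with hS
    set T : Finset V := (iterPlus G ε n X (i+1)).toFinset with hT
    have haS : a i = (S.card : ℝ) := by
      rw [ha]
      simp only [hS]
      rw [Set.ncard_eq_toFinset_card']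
    have haT : a (i+1) = (T.card : ℝ) := by
      rw [ha]
      simp only [hT]
      rw [Set.ncard_eq_toFinset_card']
    have hTS : T ⊆ S := by
      intro x hx
      rw [hT, Set.mem_toFinset] at hx
      rw [hS, Set.mem_toFinset]
      exact hsub i hx
    have hdm : ∀ x : V, (Nat.card {w : V // w ∈ iterPlus G ε n X i ∧ G w x} : ℝ)
        = ((S.filter (fun w => G w x)).card : ℝ) := by
      intro x
      have h := natCard_mem_and (iterPlus G ε n X i) (fun w => G w x)
      rw [hS]
      exact_mod_cast h
    have hout : ∀ x ∈ S, x ∉ T → ((S.filter (fun w => G w x)).card : ℝ) ≤ ε*n := by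
      intro x hxS hxT
      rw [hS, Set.mem_toFinset] at hxS
      rw [hT, Set.mem_toFinset] at hxT
      have : ¬ (ε * n ≤ (Nat.card {w : V // w ∈ iterPlus G ε n X i ∧ G w x} : ℝ)) := by
        intro hcontra
        exact hxT ⟨hxS, hcontra⟩
      rw [hdm x] at this
      linarith [lt_of_not_ge this]
    have := master G horiented c ε n hn hcε hdeg S T hTS hout
    rw [haS, haT]
    linarith [this]
  -- step facts
  have stepA : ∀ i, 8*(ε*n) ≤ a i → a i / 2 ≤ a (i+1) := by
    intro i hbig
    by_contra hlt
    push_neg at hlt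
    have h1 := hmaster i
    have h3 := hnonneg (i+1)
    have h4 : (0:ℝ) < (a i/2 - a (i+1)) * (3*(a i)/2 - 2*(ε*n) - a (i+1)) := by
      apply mul_pos
      · linarith
      · nlinarith
    nlinarith [mul_nonneg (hnonneg i) (by linarith : (0:ℝ) ≤ a i - 8*(ε*n))]
  have stepB : ∀ i, a i / 2 - 2*(ε*n) ≤ a (i+1) := by
    intro i
    by_contra hlt
    push_neg at hlt
    have h1 := hmaster i
    have h3 := hnonneg (i+1)
    have hy : (0:ℝ) < a i := by linarith
    have h4 : (0:ℝ) < (a i/2 - 2*(ε*n) - a (i+1)) * (3*(a i)/2 - a (i+1)) := by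
      apply mul_pos
      · linarith
      · linarith
    nlinarith [sq_nonneg (a i)]
  -- invariant
  have R : ∀ i, a 0 / 2^i ≤ a i ∨
      (a 0 / 2^i ≤ 4*(ε*n) ∧ a 0 / 2^i - 2*(ε*n) ≤ a i) ∨ a 0 / 2^i ≤ 2*(ε*n) := by
    intro i
    induction i with
    | zero => left; simp
    | succ i ih =>
      have hpow : a 0 / 2^(i+1) = (a 0 / 2^i) / 2 := by
        rw [pow_succ]; ring
      rcases le_or_gt (8*(ε*n)) (a i) with hbig | hsmall
      · have hA := stepA i hbig
        rcases ih with h | ⟨h1, h2⟩ | h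
        · left; rw [hpow]; linarith
        · right; right; rw [hpow]; linarith
        · right; right; rw [hpow]; linarith
      · have hB := stepB i
        rcases ih with h | ⟨h1, h2⟩ | h
        · right; left
          constructor
          · rw [hpow]; linarith
          · rw [hpow]; linarith
        · right; right; rw [hpow]; linarith
        · right; right; rw [hpow]; linarith
  intro i _
  have ha0 : a 0 = (X.ncard : ℝ) := rfl
  have hgoal : (X.ncard : ℝ)/2^i - 2*ε*n = a 0 / 2^i - 2*(ε*n) := by
    rw [ha0]; ring
  rw [hgoal]
  rcases R i with h | ⟨h1, h2⟩ | h
  · linarith [hnonneg i]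
  · linarith
  · linarith [hnonneg i]
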